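/- Let p ≥ 1, let a_1,…,a_p ∈ ℂ, and let A be the p×p companion matrix with first row (a_1,…,a_p), entries A_{r+1,r} = 1 for r = 1,…,p−1, and all other entries 0. Suppose λ_1,…,λ_p ∈ ℂ are pairwise distinct and satisfy λ^p − a_1 λ^{p−1} − ⋯ − a_p = ∏_{i=1}^p (λ − λ_i). Then for every ω ≥ 1 and every k ∈ {1,…,p}, the (1,k) entry of A^ω satisfies (A^ω)_{1,k} = (−1)^{k−1} Σ_{i=1}^p λ_i^{p+ω−1} e_{k−1}({λ_1,…,λ_p} \ {λ_i}) / ∏_{j≠i}(λ_i − λ_j), where e_{k−1} denotes the elementary symmetric polynomial of degree k−1 in the p−1 variables λ_j, j ≠ i (with e_0 = 1). -/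

import Mathlib

open Matrix BigOperators Finset

/-- The `p × p` companion matrix with first row `a` and ones on the subdiagonal. -/
def companion (p : ℕ) (a : Fin p → ℂ) : Matrix (Fin p) (Fin p) ℂ :=
  Matrix.of fun r c => if (r : ℕ) = 0 then a c else if (r : ℕ) = (c : ℕ) + 1 then 1 else 0

section Aux
open Polynomial

noncomputable def Dd (p : ℕ) (lam : Fin p → ℂ) (i : Fin p) : ℂ :=
  ∏ j ∈ Finset.univ.erase i, (lam i - lam j)

noncomputable def ee (p : ℕ) (lam : Fin p → ℂ) (k : ℕ) (i : Fin p) : ℂ :=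
  ∑ t ∈ (Finset.univ.erase i).powersetCard k, ∏ j ∈ t, lam j

noncomputable def Qp (p : ℕ) (lam : Fin p → ℂ) (i : Fin p) : Polynomial ℂ :=
  ∏ j ∈ Finset.univ.erase i, (Polynomial.X - Polynomial.C (lam j))

lemma card_erase_univ (p : ℕ) (i : Fin p) : (Finset.univ.erase i).card = p - 1 := by
  rw [Finset.card_erase_of_mem (Finset.mem_univ i), Finset.card_univ, Fintype.card_fin]

lemma Qp_coeff (p : ℕ) (lam : Fin p → ℂ) (i : Fin p) (k : ℕ) (hk : k < p) :
    (Qp p lam i).coeff (p - 1 - k) = (-1 : ℂ) ^ k * ee p lam k i := by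
  have hcard : Multiset.card ((Finset.univ.erase i).val.map lam) = p - 1 := by
    rw [Multiset.card_map]; exact card_erase_univ p i
  have h1 : Qp p lam i
      = (((Finset.univ.erase i).val.map lam).map fun t => X - C t).prod := by
    rw [Multiset.map_map]; rfl
  rw [h1, Multiset.prod_X_sub_C_coeff _ (by omega : p - 1 - k ≤ Multiset.card _)]
  rw [hcard]
  have h2 : p - 1 - (p - 1 - k) = k := by omega
  rw [h2, Finset.esymm_map_val]
  rfl

lemma ee_zero (p : ℕ) (lam : Fin p → ℂ) (i : Fin p) : ee p lam 0 i = 1 := by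
  simp [ee]

lemma ee_top (p : ℕ) (lam : Fin p → ℂ) (i : Fin p) : ee p lam p i = 0 := by
  have : (Finset.univ.erase i).powersetCard p = ∅ := by
    rw [Finset.powersetCard_eq_empty, card_erase_univ]
    have := i.pos
    omega
  simp [ee, this]

lemma hpoly (p : ℕ) (a lam : Fin p → ℂ)
    (hroots : ∀ z : ℂ, z ^ p - ∑ k : Fin p, a k * z ^ (p - 1 - (k : ℕ))
      = ∏ i : Fin p, (z - lam i)) :
    (X ^ p - ∑ k : Fin p, C (a k) * X ^ (p - 1 - (k : ℕ)) : Polynomial ℂ)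
      = ∏ i : Fin p, (X - C (lam i)) := by
  apply Polynomial.funext
  intro z
  rw [eval_sub, eval_pow, eval_X, eval_finset_sum, eval_prod]
  simp only [eval_mul, eval_C, eval_pow, eval_X, eval_sub]
  exact hroots z

lemma P_coeff (p : ℕ) (a lam : Fin p → ℂ) (k : ℕ) (hk : k < p) :
    (X ^ p - ∑ m : Fin p, C (a m) * X ^ (p - 1 - (m : ℕ)) : Polynomial ℂ).coeff (p - 1 - k)
      = -a ⟨k, hk⟩ := by
  rw [Polynomial.coeff_sub, Polynomial.coeff_X_pow, Polynomial.finset_sum_coeff]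
  have h1 : (p - 1 - k = p) = False := by simp; omega
  simp only [h1, if_false]
  rw [Finset.sum_eq_single ⟨k, hk⟩]
  · simp
  · intro m _ hm
    rw [Polynomial.coeff_C_mul, Polynomial.coeff_X_pow, if_neg, mul_zero]
    intro h
    apply hm
    have : (m : ℕ) = k := by omega
    exact Fin.ext this
  · simp

lemma keyK (p : ℕ) (a lam : Fin p → ℂ)
    (hroots : ∀ z : ℂ, z ^ p - ∑ k : Fin p, a k * z ^ (p - 1 - (k : ℕ))
      = ∏ i : Fin p, (z - lam i)) (i : Fin p) (k : ℕ) (hk : k < p) :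
    lam i * ((-1 : ℂ)^k * ee p lam k i)
      = a ⟨k, hk⟩ + (-1 : ℂ)^(k+1) * ee p lam (k+1) i := by
  have hP := hpoly p a lam hroots
  have hsplit : (∏ j : Fin p, (X - C (lam j)) : Polynomial ℂ)
      = (X - C (lam i)) * Qp p lam i :=
    (Finset.mul_prod_erase _ _ (Finset.mem_univ i)).symm
  have hco := congrArg (fun q => Polynomial.coeff q (p - 1 - k)) (hP.trans hsplit)
  rw [P_coeff p a lam k hk, sub_mul, Polynomial.coeff_sub, Polynomial.coeff_C_mul,
    Qp_coeff p lam i k hk] at hco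
  by_cases hk1 : k + 1 < p
  · have h2 : p - 1 - k = (p - 1 - (k+1)) + 1 := by omega
    rw [h2, Polynomial.coeff_X_mul, Qp_coeff p lam i (k+1) hk1] at hco
    linear_combination hco
  · have h0 : p - 1 - k = 0 := by omega
    rw [h0, Polynomial.mul_coeff_zero, Polynomial.coeff_X_zero, zero_mul] at hco
    have hkp : k + 1 = p := by omega
    rw [hkp, ee_top]
    linear_combination hco

lemma lag (p : ℕ) (lam : Fin p → ℂ) (hdist : Function.Injective lam)
    (k : ℕ) (hk : k < p) :
    ∑ i : Fin p, lam i ^ (p-1) * ((-1:ℂ)^k * ee p lam k i) / Dd p lam i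
      = if k = 0 then 1 else 0 := by
  have hinj : Set.InjOn lam (Finset.univ : Finset (Fin p)) := fun x _ y _ h => hdist h
  have hdeg : (X ^ (p-1) : Polynomial ℂ).degree < (Finset.univ : Finset (Fin p)).card := by
    rw [Polynomial.degree_X_pow, Finset.card_univ, Fintype.card_fin]
    exact_mod_cast (by omega : p - 1 < p)
  have h := Lagrange.eq_interpolate (f := X ^ (p-1)) hinj hdeg
  have hb : ∀ i : Fin p, Lagrange.basis Finset.univ lam i
      = C (Dd p lam i)⁻¹ * Qp p lam i := by
    intro i
    rw [Lagrange.basis]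
    simp_rw [Lagrange.basisDivisor]
    rw [Finset.prod_mul_distrib, ← map_prod, Finset.prod_inv_distrib]
    rfl
  have hco := congrArg (fun q => Polynomial.coeff q (p - 1 - k)) h
  simp only [Lagrange.interpolate_apply, Polynomial.finset_sum_coeff, hb] at hco
  rw [Polynomial.coeff_X_pow] at hco
  have hiff : (p - 1 - k = p - 1) ↔ (k = 0) := by omega
  rw [if_congr hiff rfl rfl] at hco
  rw [hco]
  apply Finset.sum_congr rfl
  intro i _
  rw [Polynomial.coeff_C_mul, Polynomial.coeff_C_mul, Qp_coeff p lam i k hk,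
    Polynomial.eval_pow, Polynomial.eval_X]
  field_simp

end Aux
open Polynomial

lemma main_ind (p : ℕ) (hp : 0 < p) (a : Fin p → ℂ) (lam : Fin p → ℂ)
    (hdist : Function.Injective lam)
    (hroots : ∀ z : ℂ, z ^ p - ∑ k : Fin p, a k * z ^ (p - 1 - (k : ℕ))
      = ∏ i : Fin p, (z - lam i))
    (n : ℕ) : ∀ k : Fin p,
    ((companion p a) ^ n) ⟨0, hp⟩ k
      = (-1:ℂ)^(k:ℕ) * ∑ i : Fin p, lam i ^ (p - 1 + n) * ee p lam (k:ℕ) i / Dd p lam i := by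
  induction n with
  | zero =>
    intro k
    rw [pow_zero, Matrix.one_apply]
    have h1 : (-1:ℂ)^(k:ℕ) * ∑ i : Fin p, lam i ^ (p-1+0) * ee p lam (k:ℕ) i / Dd p lam i
        = ∑ i : Fin p, lam i ^ (p-1) * ((-1:ℂ)^(k:ℕ) * ee p lam (k:ℕ) i) / Dd p lam i := by
      rw [Finset.mul_sum]
      exact Finset.sum_congr rfl fun i _ => by rw [Nat.add_zero]; ring
    rw [h1, lag p lam hdist (k:ℕ) k.isLt,
      if_congr (by simp [Fin.ext_iff, eq_comm] : ((⟨0,hp⟩ : Fin p) = k) ↔ ((k:ℕ) = 0)) rfl rfl]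
  | succ n ih =>
    intro k
    have hsum : ((companion p a)^(n+1)) ⟨0,hp⟩ k
        = ((companion p a)^n) ⟨0,hp⟩ ⟨0,hp⟩ * a k
          + ∑ c : Fin p, (if (c:ℕ) = (k:ℕ)+1 then ((companion p a)^n) ⟨0,hp⟩ c else 0) := by
      rw [pow_succ, Matrix.mul_apply]
      have h1 : ∀ c : Fin p, ((companion p a)^n) ⟨0,hp⟩ c * companion p a c k
          = (if (c:ℕ) = 0 then ((companion p a)^n) ⟨0,hp⟩ c * a k else 0)
            + (if (c:ℕ) = (k:ℕ)+1 then ((companion p a)^n) ⟨0,hp⟩ c else 0) := by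
        intro c
        show _ * (if (c:ℕ) = 0 then a k else if (c:ℕ) = (k:ℕ)+1 then 1 else 0) = _
        by_cases h0 : (c:ℕ) = 0
        · rw [if_pos h0, if_pos h0, if_neg (by omega), add_zero]
        · rw [if_neg h0, if_neg h0, zero_add]
          by_cases h2 : (c:ℕ) = (k:ℕ)+1
          · rw [if_pos h2, if_pos h2, mul_one]
          · rw [if_neg h2, if_neg h2, mul_zero]
      rw [Finset.sum_congr rfl fun c _ => h1 c, Finset.sum_add_distrib]
      congr 1
      have hc0 : ∀ c : Fin p, ((c:ℕ) = 0) ↔ (c = ⟨0,hp⟩) := by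
        intro c; simp [Fin.ext_iff]
      rw [Finset.sum_congr rfl fun c _ => if_congr (hc0 c) rfl rfl,
        Finset.sum_ite_eq' Finset.univ (⟨0,hp⟩ : Fin p)
          (fun c => ((companion p a)^n) ⟨0,hp⟩ c * a k)]
      simp
    rw [hsum, ih ⟨0,hp⟩]
    by_cases hk1 : (k:ℕ)+1 < p
    · have h2 : ∑ c : Fin p, (if (c:ℕ) = (k:ℕ)+1 then ((companion p a)^n) ⟨0,hp⟩ c else 0)
          = ((companion p a)^n) ⟨0,hp⟩ ⟨(k:ℕ)+1, hk1⟩ := by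
        have hc : ∀ c : Fin p, ((c:ℕ) = (k:ℕ)+1) ↔ (c = ⟨(k:ℕ)+1, hk1⟩) := by
          intro c; simp [Fin.ext_iff]
        rw [Finset.sum_congr rfl fun c _ => if_congr (hc c) rfl rfl,
          Finset.sum_ite_eq' Finset.univ (⟨(k:ℕ)+1, hk1⟩ : Fin p)
          (fun c => ((companion p a)^n) ⟨0,hp⟩ c)]
        simp
      rw [h2, ih ⟨(k:ℕ)+1, hk1⟩]
      simp only [Finset.mul_sum, Finset.sum_mul]
      rw [← Finset.sum_add_distrib]
      apply Finset.sum_congr rfl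
      intro i _
      have hK := keyK p a lam hroots i (k:ℕ) k.isLt
      rw [show (⟨(k:ℕ), k.isLt⟩ : Fin p) = k from Fin.eta k k.isLt] at hK
      have hpow : p - 1 + (n+1) = (p-1+n) + 1 := by omega
      rw [hpow, pow_succ, ee_zero]
      linear_combination (-(lam i ^ (p-1+n)) / Dd p lam i) * hK
    · have hkp : (k:ℕ)+1 = p := by have := k.isLt; omega
      have h2 : ∑ c : Fin p, (if (c:ℕ) = (k:ℕ)+1 then ((companion p a)^n) ⟨0,hp⟩ c else 0)
          = 0 :=
        Finset.sum_eq_zero fun c _ => if_neg (by have := c.isLt; omega)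
      rw [h2, add_zero]
      simp only [Finset.mul_sum, Finset.sum_mul]
      apply Finset.sum_congr rfl
      intro i _
      have hK := keyK p a lam hroots i (k:ℕ) k.isLt
      rw [show (⟨(k:ℕ), k.isLt⟩ : Fin p) = k from Fin.eta k k.isLt, hkp, ee_top] at hK
      have hpow : p - 1 + (n+1) = (p-1+n) + 1 := by omega
      rw [hpow, pow_succ, ee_zero]
      linear_combination (-(lam i ^ (p-1+n)) / Dd p lam i) * hK

theorem stmt6 (p : ℕ) (hp : 0 < p) (a : Fin p → ℂ) (lam : Fin p → ℂ)
    (hdist : Function.Injective lam)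
    (hroots : ∀ z : ℂ, z ^ p - ∑ k : Fin p, a k * z ^ (p - 1 - (k : ℕ))
      = ∏ i : Fin p, (z - lam i))
    (ω : ℕ) (hω : 1 ≤ ω) (k : Fin p) :
    ((companion p a) ^ ω) ⟨0, hp⟩ k
      = (-1 : ℂ) ^ (k : ℕ) * ∑ i : Fin p,
          lam i ^ (p + ω - 1)
            * (∑ t ∈ (Finset.univ.erase i).powersetCard (k : ℕ), ∏ j ∈ t, lam j)
            / ∏ j ∈ Finset.univ.erase i, (lam i - lam j) := by

  have h := main_ind p hp a lam hdist hroots ω k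
  have he : p - 1 + ω = p + ω - 1 := by omega
  rw [he] at h
  exact h
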